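/- Let 𝒫 be a topological space and let M : 𝒫 → ℝ_{>0} be a function such that every point r ∈ 𝒫 has an open neighborhood V_r with M(q) ≤ M(r) for all q ∈ V_r (i.e., M is locally bounded above by its value at the base point). If 𝒫 is a metric space, then there exists a continuous function C : 𝒫 → ℝ_{>0} with C(r) ≥ M(r) for all r ∈ 𝒫. -/
import Mathlib


/-- On a metric space, a positive function that is locally bounded above by its
value at each base point admits a continuous positive majorant. -/
theorem continuous_majorant {P : Type*} [MetricSpace P] (M : P → ℝ)
    (hpos : ∀ r, 0 < M r)
    (hloc : ∀ r : P, ∃ V : Set P, IsOpen V ∧ r ∈ V ∧ ∀ q ∈ V, M q ≤ M r) :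
    ∃ C : P → ℝ, Continuous C ∧ ∀ r, 0 < C r ∧ M r ≤ C r := by
  classical
  choose V hVo hmem hle using hloc
  have hcov : (Set.univ : Set P) ⊆ ⋃ r, V r := fun x _ => Set.mem_iUnion.2 ⟨x, hmem x⟩
  obtain ⟨f, hf⟩ := PartitionOfUnity.exists_isSubordinate isClosed_univ V hVo hcov
  refine ⟨fun x => ∑ᶠ r, f r x • M r,
    hf.continuous_finsum_smul hVo (fun i => continuousOn_const), fun x => ?_⟩
  have key : M x ≤ ∑ᶠ r, f r x • M r := by
    have hsupp : (Function.support fun r => f r x • M r) ⊆ ↑(f.finsupport x) := by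
      intro r hr
      rw [Finset.mem_coe, f.mem_finsupport]
      exact Function.support_smul_subset_left _ _ hr
    rw [finsum_eq_sum_of_support_subset _ hsupp]
    have h1 : ∑ i ∈ f.finsupport x, f i x = 1 := f.sum_finsupport (Set.mem_univ x)
    calc M x = ∑ i ∈ f.finsupport x, f i x * M x := by
          rw [← Finset.sum_mul, h1, one_mul]
      _ ≤ ∑ i ∈ f.finsupport x, f i x • M i := by
          refine Finset.sum_le_sum fun i hi => ?_
          have hx : x ∈ V i := hf i (subset_tsupport _ ((f.mem_finsupport x).1 hi))
          exact mul_le_mul_of_nonneg_left (hle i x hx) (f.nonneg i x)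
  exact ⟨lt_of_lt_of_le (hpos x) key, key⟩
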